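/- Let A be a commutative integral domain with fraction field K. For j = 1, …, k let I_j be an ideal of A and f_j ∈ I_j a nonzero element. Set f = f₁⋯f_k and let I be the ideal (f/f₁)·I₁ + … + (f/f_k)·I_k of A (the sum of the ideals generated by the products (f/f_j)·b with b ∈ I_j, where f/f_j = ∏_{i≠j} f_i ∈ A). Let A_j = A[I_j/f_j] ⊆ K. Then the affine modification A' = A[I/f] equals the subalgebra of K generated by the union A₁ ∪ … ∪ A_k, i.e. A' is the compositum of the modifications A₁, …, A_k inside K. -/
import Mathlib


/-- The affine modification `B[J/g]` of a domain `B` inside a field `K` containing `B`: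
the `B`-subalgebra of `K` generated by the fractions `b/g` with `b ∈ J`. -/
def affineModification (B K : Type*) [CommRing B] [Field K] [Algebra B K]
    (J : Ideal B) (g : B) : Subalgebra B K :=
  Algebra.adjoin B ((fun b => algebraMap B K b / algebraMap B K g) '' (J : Set B))

/-- **Proposition 2.6(1)** (algebraic form): let `A` be a domain with fraction field
`K`, let `I_j` be ideals of `A` with nonzero `f_j ∈ I_j` for `j = 1, …, k`, and set
`f = f₁⋯f_k` and `I = (f/f₁)·I₁ + … + (f/f_k)·I_k`.  Then the affine modification
`A[I/f]` equals the subalgebra of `K` generated by the union of the modifications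
`A_j = A[I_j/f_j]`, i.e. it is their compositum (supremum) inside `K`. -/
theorem stmt8 (A K : Type*) [CommRing A] [IsDomain A] [Field K] [Algebra A K]
    [IsFractionRing A K] (k : ℕ) (I : Fin k → Ideal A) (f : Fin k → A)
    (hfI : ∀ j, f j ∈ I j) (hf : ∀ j, f j ≠ 0) :
    affineModification A K
        (∑ j : Fin k, Ideal.span {∏ i ∈ Finset.univ.erase j, f i} * I j)
        (∏ j : Fin k, f j) =
      ⨆ j : Fin k, affineModification A K (I j) (f j) := by
  set F : A := ∏ j : Fin k, f j with hF
  have hFne : F ≠ 0 := Finset.prod_ne_zero_iff.mpr fun j _ => hf j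
  have hinj : Function.Injective (algebraMap A K) := IsFractionRing.injective A K
  have hFK : algebraMap A K F ≠ 0 := fun h => hFne (hinj (h.trans (map_zero _).symm))
  have hfK : ∀ j, algebraMap A K (f j) ≠ 0 :=
    fun j h => hf j (hinj (h.trans (map_zero _).symm))
  have key : ∀ (j : Fin k) (b : A),
      algebraMap A K ((∏ i ∈ Finset.univ.erase j, f i) * b) / algebraMap A K F
        = algebraMap A K b / algebraMap A K (f j) := by
    intro j b
    have : F = f j * ∏ i ∈ Finset.univ.erase j, f i :=
      (Finset.mul_prod_erase _ _ (Finset.mem_univ j)).symm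
    rw [this, map_mul, map_mul, mul_comm (algebraMap A K (f j))]
    have hg : algebraMap A K (∏ i ∈ Finset.univ.erase j, f i) ≠ 0 := by
      intro h
      exact (Finset.prod_ne_zero_iff.mpr fun i _ => hf i)
        (hinj (h.trans (map_zero _).symm))
    rw [mul_div_mul_left _ _ hg]
  apply le_antisymm
  · -- LHS ≤ sup
    apply Algebra.adjoin_le
    rintro x ⟨b, hb, rfl⟩
    -- b ∈ ∑ ideals, show b/F ∈ sup
    let T : Subalgebra A K := ⨆ j, affineModification A K (I j) (f j)
    let S : Submodule A A :=
      { carrier := {x | algebraMap A K x / algebraMap A K F ∈ T}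
        add_mem' := by
          intro a b ha hb
          simp only [Set.mem_setOf_eq, map_add, add_div] at *
          exact add_mem ha hb
        zero_mem' := by simp only [Set.mem_setOf_eq, map_zero, zero_div]; exact zero_mem T
        smul_mem' := by
          intro c x hx
          simp only [Set.mem_setOf_eq, smul_eq_mul, map_mul, mul_div_assoc] at *
          exact mul_mem (T.algebraMap_mem c) hx }
    have hsum : (∑ j : Fin k, Ideal.span {∏ i ∈ Finset.univ.erase j, f i} * I j) ≤ S := by
      refine Finset.sum_induction _ (fun J => J ≤ S)
        (fun a b ha hb => by rw [Submodule.add_eq_sup]; exact sup_le ha hb)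
        bot_le ?_
      intro j _ x hx
      obtain ⟨z, hz, rfl⟩ := Ideal.mem_span_singleton_mul.mp hx
      show algebraMap A K _ / algebraMap A K F ∈ T
      rw [key j z]
      exact le_iSup (fun j => affineModification A K (I j) (f j)) j
        (Algebra.subset_adjoin ⟨z, hz, rfl⟩)
    exact hsum hb
  · apply iSup_le
    intro j
    apply Algebra.adjoin_le
    rintro x ⟨b, hb, rfl⟩
    apply Algebra.subset_adjoin
    refine ⟨(∏ i ∈ Finset.univ.erase j, f i) * b, ?_, key j b⟩
    exact Finset.single_le_sum (f := fun j => Ideal.span {∏ i ∈ Finset.univ.erase j, f i} * I j)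
      (fun i _ => bot_le) (Finset.mem_univ j)
      (Ideal.mul_mem_mul (Ideal.mem_span_singleton_self _) hb)
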